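/- With the notation of the previous statement (T symmetric, K̃ = K̃₋ + σ²I symmetric positive definite), the difference between the upper bound U = k_nn − kᵀ(2T − T K̃ T)k and the lower bound L = k_nn − (1/σ²)(kᵀk − 2kᵀT K̃₋ k + kᵀT K̃₋ K̃ T k) equals (1/σ²)‖(I − K̃·T)k‖², i.e., U − L = ‖(I − K̃T)k‖²/σ². -/
import Mathlib
open Matrix
theorem aux1 {n : ℕ} (A : Matrix (Fin n) (Fin n) ℝ) (x y : Fin n → ℝ) :
    x ⬝ᵥ (A *ᵥ y) = (Aᵀ *ᵥ x) ⬝ᵥ y := by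
  rw [Matrix.dotProduct_mulVec, ← Matrix.vecMul_transpose, Matrix.transpose_transpose]

theorem aux2 {n : ℕ} {A B : Matrix (Fin n) (Fin n) ℝ} (hA : A.IsSymm) (hB : B.IsSymm)
    (k : Fin n → ℝ) : k ⬝ᵥ ((A * B) *ᵥ k) = k ⬝ᵥ ((B * A) *ᵥ k) := by
  rw [aux1, Matrix.transpose_mul, hA.eq, hB.eq, dotProduct_comm]

theorem stmt_8 {n : ℕ} (Km T : Matrix (Fin n) (Fin n) ℝ) (σ knn : ℝ)
    (hKm : Km.PosDef) (hσ : 0 < σ) (hT : T.IsSymm) (k : Fin n → ℝ) :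
    let Kt := Km + σ ^ 2 • (1 : Matrix (Fin n) (Fin n) ℝ)
    let U := knn - k ⬝ᵥ ((2 • T - T * Kt * T) *ᵥ k)
    let L := knn - (1 / σ ^ 2) *
      (k ⬝ᵥ k - 2 * (k ⬝ᵥ ((T * Km) *ᵥ k)) + k ⬝ᵥ ((T * Km * Kt * T) *ᵥ k))
    let v := ((1 : Matrix (Fin n) (Fin n) ℝ) - Kt * T) *ᵥ k
    U - L = (v ⬝ᵥ v) / σ ^ 2 := by
  intro Kt U L v
  have hKms : Km.IsSymm := hKm.isHermitian
  have hKts : Kt.IsSymm := by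
    simp [Kt, Matrix.IsSymm, Matrix.transpose_add, hKms.eq]
  have hs2 : σ ^ 2 ≠ 0 := by positivity
  have hv : v ⬝ᵥ v = k ⬝ᵥ k - 2 * (k ⬝ᵥ ((T * Km) *ᵥ k)) - 2 * σ^2 * (k ⬝ᵥ (T *ᵥ k))
      + (k ⬝ᵥ ((T * Km * Kt * T) *ᵥ k) + σ^2 * (k ⬝ᵥ ((T * Kt * T) *ᵥ k))) := by
    have hvk : v = k - (Kt * T) *ᵥ k := by
      simp [v, Matrix.sub_mulVec]
    rw [hvk]
    simp only [sub_dotProduct, dotProduct_sub]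
    have h1 : ((Kt * T) *ᵥ k) ⬝ᵥ k = k ⬝ᵥ ((Kt * T) *ᵥ k) := dotProduct_comm _ _
    have hKtT : (Kt * T)ᵀ = T * Kt := by rw [Matrix.transpose_mul, hKts.eq, hT.eq]
    have h2 : ((Kt * T) *ᵥ k) ⬝ᵥ ((Kt * T) *ᵥ k) = k ⬝ᵥ ((T * Kt * (Kt * T)) *ᵥ k) := by
      rw [aux1, hKtT, Matrix.mulVec_mulVec, dotProduct_comm, Matrix.mul_assoc]
    have h3 : k ⬝ᵥ ((Kt * T) *ᵥ k) = k ⬝ᵥ ((T * Km) *ᵥ k) + σ^2 * (k ⬝ᵥ (T *ᵥ k)) := by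
      have hKT : Kt * T = Km * T + σ^2 • T := by
        simp [Kt, Matrix.add_mul, Matrix.smul_mul]
      rw [hKT, Matrix.add_mulVec, dotProduct_add, Matrix.smul_mulVec,
        dotProduct_smul, aux2 hKms hT, smul_eq_mul]
    have h4 : T * Kt * (Kt * T) = T * Km * Kt * T + σ^2 • (T * Kt * T) := by
      have hTK : T * Kt = T * Km + σ^2 • T := by
        simp [Kt, Matrix.mul_add, Matrix.mul_smul]
      nth_rewrite 1 [hTK]
      rw [Matrix.add_mul, Matrix.smul_mul, Matrix.mul_assoc (T*Km), ← Matrix.mul_assoc T Kt T]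
    rw [h1, h2, h3, h4, Matrix.add_mulVec, dotProduct_add,
      Matrix.smul_mulVec, dotProduct_smul, smul_eq_mul]
    ring
  have hU : k ⬝ᵥ ((2 • T - T * Kt * T) *ᵥ k) = 2 * (k ⬝ᵥ (T *ᵥ k)) - k ⬝ᵥ ((T * Kt * T) *ᵥ k) := by
    rw [Matrix.sub_mulVec, dotProduct_sub]
    congr 1
    rw [two_smul, Matrix.add_mulVec, dotProduct_add]; ring
  simp only [U, L, hU]
  rw [hv]
  field_simp
  ring
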